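/- Let D be a discount function satisfying the extended weak one-switch property. Then for every difference function Δ of D and all 0 ≤ σ₁ < σ₂, if Δ(σ₁) = 0 and Δ(σ₂) = 0, then Δ(σ) = 0 for every σ ∈ (σ₁, σ₂). -/

import Mathlib

def IsDiscount (D : ℝ → ℝ) : Prop :=
  D 0 = 1 ∧ (∀ t, 0 ≤ t → 0 < D t) ∧ StrictAntiOn D (Set.Ici 0) ∧
    Filter.Tendsto D Filter.atTop (nhds 0)

noncomputable def diffFn {n m : ℕ} (D : ℝ → ℝ) (t : Fin n → ℝ) (s : Fin m → ℝ)
    (v : Fin n → ℝ) (w : Fin m → ℝ) : ℝ → ℝ :=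
  fun σ => (∑ i, D (t i + σ) * v i) - (∑ j, D (s j + σ) * w j)

def DoubleSwitch (Δ : ℝ → ℝ) : Prop :=
  ∃ σ₁ σ₂ σ₃ : ℝ, 0 ≤ σ₁ ∧ σ₁ < σ₂ ∧ σ₂ < σ₃ ∧
    ((0 < Δ σ₁ ∧ Δ σ₂ < 0 ∧ 0 < Δ σ₃) ∨ (Δ σ₁ < 0 ∧ 0 < Δ σ₂ ∧ Δ σ₃ < 0))

def ExtWeakOneSwitch (D : ℝ → ℝ) : Prop :=
  ∀ (n m : ℕ), 0 < n → 0 < m →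
    ∀ (t : Fin n → ℝ) (s : Fin m → ℝ) (v : Fin n → ℝ) (w : Fin m → ℝ),
      StrictMono t → StrictMono s → (∀ i, 0 ≤ t i) → (∀ j, 0 ≤ s j) →
      (∀ i, 0 ≤ v i) → (∀ j, 0 ≤ w j) → ¬ DoubleSwitch (diffFn D t s v w)

lemma snoc_strictMono' {m : ℕ} {s : Fin m → ℝ} (hs : StrictMono s) {S : ℝ}
    (hS : ∀ j, s j < S) : StrictMono (Fin.snoc s S) := by
  intro a b hab
  rcases Fin.eq_castSucc_or_eq_last b with ⟨b', rfl⟩ | rfl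
  · have : a < Fin.last m := lt_of_lt_of_le hab (Fin.le_last _)
    obtain ⟨a', rfl⟩ := Fin.eq_castSucc_or_eq_last a |>.resolve_right
      (by rintro rfl; exact absurd this (lt_irrefl _))
    simp only [Fin.snoc_castSucc]
    exact hs (by exact_mod_cast hab)
  · have : a < Fin.last m := hab
    obtain ⟨a', rfl⟩ := Fin.eq_castSucc_or_eq_last a |>.resolve_right
      (by rintro rfl; exact absurd this (lt_irrefl _))
    simp only [Fin.snoc_castSucc, Fin.snoc_last]
    exact hS a'

lemma aux_pos (D : ℝ → ℝ) (hD : IsDiscount D) (hW : ExtWeakOneSwitch D)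
    (n m : ℕ) (hn : 0 < n) (hm : 0 < m)
    (t : Fin n → ℝ) (s : Fin m → ℝ) (v : Fin n → ℝ) (w : Fin m → ℝ)
    (ht : StrictMono t) (hs : StrictMono s) (ht0 : ∀ i, 0 ≤ t i) (hs0 : ∀ j, 0 ≤ s j)
    (hv : ∀ i, 0 ≤ v i) (hw : ∀ j, 0 ≤ w j)
    (σ₁ σ₂ σ : ℝ) (h1 : 0 ≤ σ₁) (hσ1 : σ₁ < σ) (hσ2 : σ < σ₂)
    (hz1 : diffFn D t s v w σ₁ = 0) (hz2 : diffFn D t s v w σ₂ = 0)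
    (hpos : 0 < diffFn D t s v w σ) : False := by
  obtain ⟨-, hDpos, -, -⟩ := hD
  set S : ℝ := s ⟨m - 1, Nat.sub_lt hm one_pos⟩ + 1 with hSdef
  have hSgt : ∀ j, s j < S := by
    intro j
    have : s j ≤ s ⟨m - 1, Nat.sub_lt hm one_pos⟩ := by
      rcases lt_or_eq_of_le (Nat.le_sub_one_of_lt j.isLt) with h | h
      · exact le_of_lt (hs (by exact h))
      · exact le_of_eq (congrArg s (Fin.ext h))
    linarith
  have hS0 : 0 ≤ S := le_trans (hs0 ⟨m - 1, Nat.sub_lt hm one_pos⟩) (le_of_lt (hSgt ⟨m - 1, Nat.sub_lt hm one_pos⟩))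
  have hσ0 : 0 ≤ σ := le_trans h1 (le_of_lt hσ1)
  have hσ20 : 0 ≤ σ₂ := le_trans hσ0 (le_of_lt hσ2)
  have hDSσ : 0 < D (S + σ) := hDpos _ (by linarith)
  set ε : ℝ := diffFn D t s v w σ / (2 * D (S + σ)) with hεdef
  have hε : 0 < ε := div_pos hpos (by linarith)
  set s' : Fin (m + 1) → ℝ := Fin.snoc s S
  set w' : Fin (m + 1) → ℝ := Fin.snoc w ε
  have hs' : StrictMono s' := snoc_strictMono' hs hSgt
  have hs0' : ∀ j, 0 ≤ s' j := by
    intro j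
    rcases Fin.eq_castSucc_or_eq_last j with ⟨j', rfl⟩ | rfl
    · simpa [s'] using hs0 j'
    · simpa [s'] using hS0
  have hw' : ∀ j, 0 ≤ w' j := by
    intro j
    rcases Fin.eq_castSucc_or_eq_last j with ⟨j', rfl⟩ | rfl
    · simpa [w'] using hw j'
    · simpa [w'] using le_of_lt hε
  have hval : ∀ x, diffFn D t s' v w' x = diffFn D t s v w x - D (S + x) * ε := by
    intro x
    simp only [diffFn, s', w', Fin.sum_univ_castSucc, Fin.snoc_castSucc, Fin.snoc_last]
    ring
  apply hW n (m + 1) hn (Nat.succ_pos m) t s' v w' ht hs' ht0 hs0' hv hw'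
  refine ⟨σ₁, σ, σ₂, h1, hσ1, hσ2, Or.inr ⟨?_, ?_, ?_⟩⟩
  · rw [hval, hz1]
    have := hDpos (S + σ₁) (by linarith)
    nlinarith
  · rw [hval, hεdef]
    have : D (S + σ) * (diffFn D t s v w σ / (2 * D (S + σ)))
        = diffFn D t s v w σ / 2 := by
      field_simp
    rw [this]
    linarith
  · rw [hval, hz2]
    have := hDpos (S + σ₂) (by linarith)
    nlinarith

lemma diffFn_neg_swap {n m : ℕ} (D : ℝ → ℝ) (t : Fin n → ℝ) (s : Fin m → ℝ)
    (v : Fin n → ℝ) (w : Fin m → ℝ) (x : ℝ) :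
    diffFn D s t w v x = -diffFn D t s v w x := by
  simp [diffFn]

theorem weak_one_switch_zero_between (D : ℝ → ℝ) (hD : IsDiscount D)
    (hW : ExtWeakOneSwitch D) (n m : ℕ) (hn : 0 < n) (hm : 0 < m)
    (t : Fin n → ℝ) (s : Fin m → ℝ) (v : Fin n → ℝ) (w : Fin m → ℝ)
    (ht : StrictMono t) (hs : StrictMono s) (ht0 : ∀ i, 0 ≤ t i) (hs0 : ∀ j, 0 ≤ s j)
    (hv : ∀ i, 0 ≤ v i) (hw : ∀ j, 0 ≤ w j)
    (σ₁ σ₂ : ℝ) (h1 : 0 ≤ σ₁) (h12 : σ₁ < σ₂)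
    (hz1 : diffFn D t s v w σ₁ = 0) (hz2 : diffFn D t s v w σ₂ = 0) :
    ∀ σ, σ₁ < σ → σ < σ₂ → diffFn D t s v w σ = 0 := by
  intro σ hσ1 hσ2
  by_contra hne
  rcases lt_or_gt_of_ne hne with hneg | hpos
  · exact aux_pos D hD hW m n hm hn s t w v hs ht hs0 ht0 hw hv σ₁ σ₂ σ h1 hσ1 hσ2
      (by rw [diffFn_neg_swap, hz1]; ring)
      (by rw [diffFn_neg_swap, hz2]; ring)
      (by rw [diffFn_neg_swap]; linarith)
  · exact aux_pos D hD hW n m hn hm t s v w ht hs ht0 hs0 hv hw σ₁ σ₂ σ h1 hσ1 hσ2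
      hz1 hz2 hpos
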